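/- For every t ∈ (0,1) there exists a constant C_t > 0 such that for every λ ∈ (0,1/2] and every r ∈ [1−t, 1], ∑_{p ∈ ℤ²} λ(1+|p|²) / (exp(r λ (1+|p|²)) − 1) ≤ C_t · λ^{−1}. -/

import Mathlib

open scoped ENNReal

/-- Squared Euclidean norm on `ℤ²`. -/
noncomputable def nsq (p : ℤ × ℤ) : ℝ := (p.1 : ℝ) ^ 2 + (p.2 : ℝ) ^ 2

lemma nsq_nonneg (p : ℤ × ℤ) : 0 ≤ nsq p := by
  unfold nsq; positivity

lemma exp_lb (y : ℝ) (hy : 0 ≤ y) : y / 2 * Real.exp (y / 2) ≤ Real.exp y - 1 := by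
  have h1 : y / 2 + 1 ≤ Real.exp (y / 2) := Real.add_one_le_exp _
  have h2 : Real.exp (y / 2) * Real.exp (y / 2) = Real.exp y := by
    rw [← Real.exp_add]; ring_nf
  nlinarith [Real.exp_pos (y / 2)]

lemma nat_bound {a : ℝ} (ha : 0 < a) (ha1 : a ≤ 1) :
    ∑' n : ℕ, ENNReal.ofReal (Real.exp (-(a * (n : ℝ) ^ 2))) ≤
      ENNReal.ofReal (4 / Real.sqrt a) := by
  set s := Real.sqrt a with hs
  have hs0 : 0 < s := Real.sqrt_pos.mpr ha
  have hs1 : s ≤ 1 := by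
    rw [hs, show (1 : ℝ) = Real.sqrt 1 by simp]
    exact Real.sqrt_le_sqrt ha1
  have hss : s * s = a := Real.mul_self_sqrt ha.le
  set N := ⌈1 / s⌉₊ with hN
  have hsN : s ≤ a * N := by
    have h1 : (1 : ℝ) / s ≤ N := Nat.le_ceil _
    have h2 : a * (1 / s) ≤ a * N := mul_le_mul_of_nonneg_left h1 ha.le
    calc s = a * (1 / s) := by field_simp [← hss]; linear_combination hss
      _ ≤ a * N := h2
  have hNle : (N : ℝ) ≤ 2 / s := by
    have h1 : (N : ℝ) ≤ 1 / s + 1 := le_of_lt (Nat.ceil_lt_add_one (by positivity))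
    have h2 : (1 : ℝ) ≤ 1 / s := by
      rw [le_div_iff₀ hs0]; simpa using hs1
    calc (N : ℝ) ≤ 1 / s + 1 := h1
      _ ≤ 1 / s + 1 / s := by linarith
      _ = 2 / s := by ring
  rw [← Summable.sum_add_tsum_nat_add' (f := fun n : ℕ => ENNReal.ofReal (Real.exp (-(a * (n : ℝ) ^ 2))))
    (k := N) ENNReal.summable]
  have head : (∑ i ∈ Finset.range N, ENNReal.ofReal (Real.exp (-(a * (i : ℝ) ^ 2)))) ≤
      ENNReal.ofReal (2 / s) := by
    calc (∑ i ∈ Finset.range N, ENNReal.ofReal (Real.exp (-(a * (i : ℝ) ^ 2))))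
        ≤ ∑ _i ∈ Finset.range N, 1 := by
          refine Finset.sum_le_sum fun i _ => ?_
          rw [ENNReal.ofReal_le_one]
          exact Real.exp_le_one_iff.mpr (neg_nonpos.mpr (by positivity))
      _ = (N : ℝ≥0∞) := by simp
      _ = ENNReal.ofReal (N : ℝ) := by simp [ENNReal.ofReal_natCast]
      _ ≤ ENNReal.ofReal (2 / s) := ENNReal.ofReal_le_ofReal hNle
  have tail : (∑' i : ℕ, ENNReal.ofReal (Real.exp (-(a * ((i + N : ℕ) : ℝ) ^ 2)))) ≤
      ENNReal.ofReal (2 / s) := by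
    have hpt : ∀ i : ℕ, ENNReal.ofReal (Real.exp (-(a * ((i + N : ℕ) : ℝ) ^ 2))) ≤
        (ENNReal.ofReal (Real.exp (-s))) ^ i := by
      intro i
      rw [← ENNReal.ofReal_pow (Real.exp_pos _).le, ← Real.exp_nat_mul]
      apply ENNReal.ofReal_le_ofReal
      apply Real.exp_le_exp.mpr
      push_cast
      have hi0 : (0 : ℝ) ≤ (i : ℝ) := Nat.cast_nonneg i
      have hN0 : (0 : ℝ) ≤ (N : ℝ) := Nat.cast_nonneg N
      have key : s * (i : ℝ) ≤ a * ((i : ℝ) + N) ^ 2 := by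
        nlinarith [mul_le_mul_of_nonneg_right hsN hi0,
          mul_nonneg ha.le (sq_nonneg ((i : ℝ))),
          mul_nonneg ha.le (mul_nonneg hi0 hN0),
          mul_nonneg ha.le (sq_nonneg ((N : ℝ)))]
      linarith
    calc (∑' i : ℕ, ENNReal.ofReal (Real.exp (-(a * ((i + N : ℕ) : ℝ) ^ 2))))
        ≤ ∑' i : ℕ, (ENNReal.ofReal (Real.exp (-s))) ^ i := ENNReal.tsum_le_tsum hpt
      _ = (1 - ENNReal.ofReal (Real.exp (-s)))⁻¹ := ENNReal.tsum_geometric _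
      _ ≤ ENNReal.ofReal (2 / s) := by
          have hE : Real.exp (-s) * Real.exp s = 1 := by
            rw [← Real.exp_add]; simp
          have hkey : Real.exp (-s) ≤ 1 - s / 2 := by
            nlinarith [hE, Real.add_one_le_exp s, Real.exp_pos (-s), hs0, hs1,
              mul_nonneg (Real.exp_pos (-s)).le hs0.le]
          have hpos : (0 : ℝ) < 1 - Real.exp (-s) := by nlinarith
          rw [← ENNReal.ofReal_one, ← ENNReal.ofReal_sub _ (Real.exp_pos (-s)).le,
            ← ENNReal.ofReal_inv_of_pos hpos]
          apply ENNReal.ofReal_le_ofReal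
          have h2s : (2 : ℝ) / s = (s / 2)⁻¹ := by
            field_simp
          rw [h2s]
          exact inv_anti₀ (by positivity) (by nlinarith)
  calc _ ≤ ENNReal.ofReal (2 / s) + ENNReal.ofReal (2 / s) := add_le_add head tail
    _ = ENNReal.ofReal (4 / s) := by
        rw [← ENNReal.ofReal_add (by positivity) (by positivity)]
        ring_nf

lemma int_bound {a : ℝ} (ha : 0 < a) (ha1 : a ≤ 1) :
    ∑' n : ℤ, ENNReal.ofReal (Real.exp (-(a * (n : ℝ) ^ 2))) ≤
      ENNReal.ofReal (8 / Real.sqrt a) := by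
  rw [tsum_of_nat_of_neg_add_one ENNReal.summable ENNReal.summable]
  have hneg : (∑' n : ℕ, ENNReal.ofReal (Real.exp (-(a * ((-((n : ℤ) + 1) : ℤ) : ℝ) ^ 2)))) ≤
      ENNReal.ofReal (4 / Real.sqrt a) := by
    refine le_trans (ENNReal.tsum_le_tsum fun n => ?_) (nat_bound ha ha1)
    apply ENNReal.ofReal_le_ofReal
    apply Real.exp_le_exp.mpr
    push_cast
    have h : (0 : ℝ) ≤ (n : ℝ) := Nat.cast_nonneg n
    nlinarith [ha.le]
  calc _ ≤ ENNReal.ofReal (4 / Real.sqrt a) + ENNReal.ofReal (4 / Real.sqrt a) :=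
        add_le_add (nat_bound ha ha1) hneg
    _ = ENNReal.ofReal (8 / Real.sqrt a) := by
        rw [← ENNReal.ofReal_add (by positivity) (by positivity)]
        ring_nf

lemma plane_bound {a : ℝ} (ha : 0 < a) (ha1 : a ≤ 1) :
    ∑' p : ℤ × ℤ, ENNReal.ofReal (Real.exp (-(a * nsq p))) ≤ ENNReal.ofReal (64 / a) := by
  have hfac : ∀ p : ℤ × ℤ, Real.exp (-(a * nsq p)) =
      Real.exp (-(a * (p.1 : ℝ) ^ 2)) * Real.exp (-(a * (p.2 : ℝ) ^ 2)) := by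
    intro p
    rw [← Real.exp_add]
    unfold nsq
    ring_nf
  calc ∑' p : ℤ × ℤ, ENNReal.ofReal (Real.exp (-(a * nsq p)))
      = ∑' m : ℤ, ∑' n : ℤ, ENNReal.ofReal (Real.exp (-(a * (m : ℝ) ^ 2))) *
          ENNReal.ofReal (Real.exp (-(a * (n : ℝ) ^ 2))) := by
        rw [show (fun p : ℤ × ℤ => ENNReal.ofReal (Real.exp (-(a * nsq p)))) =
          fun p : ℤ × ℤ => ENNReal.ofReal (Real.exp (-(a * (p.1 : ℝ) ^ 2))) *
            ENNReal.ofReal (Real.exp (-(a * (p.2 : ℝ) ^ 2))) from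
          funext fun p => by rw [hfac p, ENNReal.ofReal_mul (Real.exp_pos _).le]]
        exact ENNReal.tsum_prod'
    _ = (∑' m : ℤ, ENNReal.ofReal (Real.exp (-(a * (m : ℝ) ^ 2)))) *
          (∑' n : ℤ, ENNReal.ofReal (Real.exp (-(a * (n : ℝ) ^ 2)))) := by
        rw [← ENNReal.tsum_mul_right]
        exact tsum_congr fun m => ENNReal.tsum_mul_left
    _ ≤ ENNReal.ofReal (8 / Real.sqrt a) * ENNReal.ofReal (8 / Real.sqrt a) :=
        mul_le_mul' (int_bound ha ha1) (int_bound ha ha1)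
    _ = ENNReal.ofReal (64 / a) := by
        rw [← ENNReal.ofReal_mul (by positivity)]
        congr 1
        have hss : Real.sqrt a * Real.sqrt a = a := Real.mul_self_sqrt ha.le
        have hs0 : (0 : ℝ) < Real.sqrt a := Real.sqrt_pos.mpr ha
        field_simp
        nlinarith [hss]

/-- Bound on the derivative of the log of the free partition function:
for fixed `t ∈ (0,1)`, uniformly in `λ ∈ (0,1/2]` and `r ∈ [1-t,1]`,
`∑_p λ h(p)/(e^{rλ h(p)} - 1) ≤ C_t λ^{-1}`. -/
theorem free_partition_derivative_bound (t : ℝ) (ht : t ∈ Set.Ioo (0 : ℝ) 1) :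
    ∃ C : ℝ, 0 < C ∧
      ∀ lam : ℝ, lam ∈ Set.Ioc (0 : ℝ) (1 / 2) → ∀ r : ℝ, r ∈ Set.Icc (1 - t) 1 →
        ∑' p : ℤ × ℤ,
          ENNReal.ofReal
            (lam * (1 + nsq p) / (Real.exp (r * lam * (1 + nsq p)) - 1)) ≤
        ENNReal.ofReal (C / lam) := by
  obtain ⟨ht0, ht1⟩ := ht
  have h1t : 0 < 1 - t := by linarith
  refine ⟨256 / (1 - t) ^ 2, by positivity, ?_⟩
  rintro lam ⟨hlam0, hlam2⟩ r ⟨hr1, hr2⟩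
  have hr0 : 0 < r := lt_of_lt_of_le h1t hr1
  set a : ℝ := r * lam / 2 with ha_def
  have ha : 0 < a := by positivity
  have ha1 : a ≤ 1 := by nlinarith
  have hpt : ∀ p : ℤ × ℤ,
      lam * (1 + nsq p) / (Real.exp (r * lam * (1 + nsq p)) - 1) ≤
        2 / r * Real.exp (-(a * nsq p)) := by
    intro p
    have hnn := nsq_nonneg p
    set H : ℝ := 1 + nsq p with hH_def
    have hH : 1 ≤ H := by rw [hH_def]; linarith
    have hH0 : 0 < H := by linarith
    set y : ℝ := r * lam * H with hy_def
    have hy0 : 0 < y := by positivity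
    have hlb : y / 2 * Real.exp (y / 2) ≤ Real.exp y - 1 := exp_lb y hy0.le
    have hden : 0 < y / 2 * Real.exp (y / 2) := by positivity
    have step1 : lam * H / (Real.exp y - 1) ≤ lam * H / (y / 2 * Real.exp (y / 2)) :=
      div_le_div_of_nonneg_left (by positivity) hden hlb
    have step2 : lam * H / (y / 2 * Real.exp (y / 2)) = 2 / r * Real.exp (-(y / 2)) := by
      rw [Real.exp_neg, hy_def]
      field_simp
    have step3 : 2 / r * Real.exp (-(y / 2)) ≤ 2 / r * Real.exp (-(a * nsq p)) := by
      apply mul_le_mul_of_nonneg_left _ (by positivity)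
      apply Real.exp_le_exp.mpr
      rw [hy_def, hH_def, ha_def]
      nlinarith
    calc lam * H / (Real.exp y - 1) ≤ lam * H / (y / 2 * Real.exp (y / 2)) := step1
      _ = 2 / r * Real.exp (-(y / 2)) := step2
      _ ≤ 2 / r * Real.exp (-(a * nsq p)) := step3
  calc ∑' p : ℤ × ℤ, ENNReal.ofReal
          (lam * (1 + nsq p) / (Real.exp (r * lam * (1 + nsq p)) - 1))
      ≤ ∑' p : ℤ × ℤ, ENNReal.ofReal (2 / r * Real.exp (-(a * nsq p))) :=
        ENNReal.tsum_le_tsum fun p => ENNReal.ofReal_le_ofReal (hpt p)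
    _ = ENNReal.ofReal (2 / r) * ∑' p : ℤ × ℤ, ENNReal.ofReal (Real.exp (-(a * nsq p))) := by
        rw [← ENNReal.tsum_mul_left]
        exact tsum_congr fun p => ENNReal.ofReal_mul (by positivity)
    _ ≤ ENNReal.ofReal (2 / r) * ENNReal.ofReal (64 / a) :=
        by gcongr; exact plane_bound ha ha1
    _ = ENNReal.ofReal (2 / r * (64 / a)) := (ENNReal.ofReal_mul (by positivity)).symm
    _ ≤ ENNReal.ofReal (256 / (1 - t) ^ 2 / lam) := by
        apply ENNReal.ofReal_le_ofReal
        rw [ha_def]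
        have hr2' : (1 - t) ^ 2 ≤ r ^ 2 := by nlinarith
        have heq : 2 / r * (64 / (r * lam / 2)) = 256 / (r ^ 2 * lam) := by
          field_simp
          ring
        rw [heq, div_div]
        exact div_le_div_of_nonneg_left (by norm_num) (by positivity)
          (mul_le_mul_of_nonneg_right hr2' hlam0.le)
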